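/- arXiv:1610.00867 — 2 statements merged into one kernel-verified Lean document; each statement's English description precedes it below -/
import Mathlib

section
/- Let X and Y be random variables on a probability space (Ω, μ) (μ a probability measure) taking values in finite types 𝒳 and 𝒴, let 𝓜 be a finite type, let φ : 𝒳 × 𝒴 → 𝓜, and set M = φ(X, Y). If there exist maps ψ₁ : 𝓜 × 𝒳 → 𝒴 and ψ₂ : 𝓜 × 𝒴 → 𝒳 such that ψ₁(M, X) = Y almost surely and ψ₂(M, Y) = X almost surely, then H[M] ≥ max(H[Y | X], H[X | Y]). -/
open MeasureTheory

/-- Shannon entropy of a random variable taking values in a finite type. -/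
noncomputable def ent {Ω : Type*} [MeasurableSpace Ω] (μ : Measure Ω)
    {α : Type*} [Fintype α] (X : Ω → α) : ℝ :=
  ∑ a : α, Real.negMulLog ((μ (X ⁻¹' {a})).toReal)

/-- `condEnt μ X Y` is the conditional Shannon entropy `H[Y | X]`. -/
noncomputable def condEnt {Ω : Type*} [MeasurableSpace Ω] (μ : Measure Ω)
    {α β : Type*} [Fintype α] [Fintype β] (X : Ω → α) (Y : Ω → β) : ℝ :=
  ent μ (fun ω => (X ω, Y ω)) - ent μ X

lemma negMulLog_sum_le {ι : Type*} (s : Finset ι) (f : ι → ℝ) (hf : ∀ i ∈ s, 0 ≤ f i) :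
    Real.negMulLog (∑ i ∈ s, f i) ≤ ∑ i ∈ s, Real.negMulLog (f i) := by
  have hS : Real.negMulLog (∑ i ∈ s, f i)
      = ∑ i ∈ s, -(f i * Real.log (∑ j ∈ s, f j)) := by
    simp [Real.negMulLog, Finset.sum_mul, Finset.sum_neg_distrib]
  rw [hS]
  refine Finset.sum_le_sum fun i hi => ?_
  rcases eq_or_lt_of_le (hf i hi) with h0 | hpos
  · simp [Real.negMulLog, ← h0]
  · have hlog : Real.log (f i) ≤ Real.log (∑ j ∈ s, f j) :=
      Real.log_le_log hpos (Finset.single_le_sum hf hi)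
    simp only [Real.negMulLog, neg_mul]
    nlinarith

lemma gibbs {ι : Type*} [Fintype ι] (p q : ι → ℝ) (hp : ∀ i, 0 ≤ p i)
    (hq : ∀ i, 0 ≤ q i) (hpq : ∀ i, p i ≠ 0 → 0 < q i)
    (hsum : ∑ i, q i ≤ ∑ i, p i) :
    ∑ i, Real.negMulLog (p i) ≤ ∑ i, -(p i * Real.log (q i)) := by
  have key : ∀ i, p i * Real.log (q i) - p i * Real.log (p i) ≤ q i - p i := by
    intro i
    rcases eq_or_lt_of_le (hp i) with h0 | hpos
    · simpa [← h0] using hq i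
    · have hqi : 0 < q i := hpq i (ne_of_gt hpos)
      have hlog : Real.log (q i / p i) ≤ q i / p i - 1 :=
        Real.log_le_sub_one_of_pos (by positivity)
      rw [Real.log_div (ne_of_gt hqi) (ne_of_gt hpos)] at hlog
      have h2 := mul_le_mul_of_nonneg_left hlog (le_of_lt hpos)
      have h3 : p i * (q i / p i - 1) = q i - p i := by field_simp
      nlinarith
  have h1 : ∑ i, (p i * Real.log (q i) - p i * Real.log (p i)) ≤ ∑ i, (q i - p i) :=
    Finset.sum_le_sum fun i _ => key i
  rw [Finset.sum_sub_distrib, Finset.sum_sub_distrib] at h1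
  simp only [Real.negMulLog, neg_mul, Finset.sum_neg_distrib]
  linarith

section aux
variable {Ω : Type*} [MeasurableSpace Ω] (μ : Measure Ω) [IsProbabilityMeasure μ]

omit [IsProbabilityMeasure μ] in
lemma ent_congr_ae {α : Type*} [Fintype α] {Z W : Ω → α}
    (h : ∀ᵐ ω ∂μ, Z ω = W ω) : ent μ Z = ent μ W := by
  refine Finset.sum_congr rfl fun a _ => ?_
  have : μ (Z ⁻¹' {a}) = μ (W ⁻¹' {a}) := by
    apply measure_congr
    filter_upwards [h] with ω hω
    exact congrArg (· ∈ ({a} : Set α)) hω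
  rw [this]

omit [IsProbabilityMeasure μ] in
lemma measure_comp_fiber {α β : Type*} [Fintype α] [DecidableEq β] {Z : Ω → α}
    (hZ : ∀ a, MeasurableSet (Z ⁻¹' {a})) (g : α → β) (b : β) :
    μ ((fun ω => g (Z ω)) ⁻¹' {b})
      = ∑ a ∈ Finset.univ.filter (fun a => g a = b), μ (Z ⁻¹' {a}) := by
  rw [← measure_biUnion_finset]
  · congr 1
    ext ω
    simp [Set.mem_preimage]
  · intro a _ a' _ hne
    simp only [Function.onFun]
    apply Set.disjoint_left.2
    intro ω h1 h2
    exact hne (by simp_all [Set.mem_preimage])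
  · exact fun a _ => hZ a

/-- Data processing: entropy decreases under maps. -/
lemma ent_comp_le {α β : Type*} [Fintype α] [Fintype β] {Z : Ω → α}
    (hZ : ∀ a, MeasurableSet (Z ⁻¹' {a})) (g : α → β) :
    ent μ (fun ω => g (Z ω)) ≤ ent μ Z := by
  classical
  unfold ent
  have hb : ∀ b : β, (μ ((fun ω => g (Z ω)) ⁻¹' {b})).toReal
      = ∑ a ∈ Finset.univ.filter (fun a => g a = b), (μ (Z ⁻¹' {a})).toReal := by
    intro b
    rw [measure_comp_fiber μ hZ g b, ENNReal.toReal_sum fun a _ => measure_ne_top μ _]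
  calc ∑ b : β, Real.negMulLog ((μ ((fun ω => g (Z ω)) ⁻¹' {b})).toReal)
      ≤ ∑ b : β, ∑ a ∈ Finset.univ.filter (fun a => g a = b),
          Real.negMulLog ((μ (Z ⁻¹' {a})).toReal) := by
        refine Finset.sum_le_sum fun b _ => ?_
        rw [hb b]
        exact negMulLog_sum_le _ _ fun a _ => ENNReal.toReal_nonneg
    _ = ∑ a : α, Real.negMulLog ((μ (Z ⁻¹' {a})).toReal) :=
        Finset.sum_fiberwise Finset.univ g (fun a => Real.negMulLog ((μ (Z ⁻¹' {a})).toReal))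

/-- Subadditivity of entropy. -/
lemma ent_pair_le {α β : Type*} [Fintype α] [Fintype β] {A : Ω → α} {B : Ω → β}
    (hAB : ∀ c : α × β, MeasurableSet ((fun ω => (A ω, B ω)) ⁻¹' {c})) :
    ent μ (fun ω => (A ω, B ω)) ≤ ent μ A + ent μ B := by
  classical
  set p : α × β → ℝ := fun c => (μ ((fun ω => (A ω, B ω)) ⁻¹' {c})).toReal with hp_def
  have hp0 : ∀ c, 0 ≤ p c := fun c => ENNReal.toReal_nonneg
  -- marginals
  have hA : ∀ a : α, (μ (A ⁻¹' {a})).toReal = ∑ b : β, p (a, b) := by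
    intro a
    have : A ⁻¹' {a} = ⋃ b ∈ (Finset.univ : Finset β),
        (fun ω => (A ω, B ω)) ⁻¹' {(a, b)} := by
      ext ω; simp [Set.mem_preimage]
    rw [this, measure_biUnion_finset ?_ fun b _ => hAB (a, b),
      ENNReal.toReal_sum fun b _ => measure_ne_top μ _]
    · intro b _ b' _ hne
      simp only [Function.onFun]
      apply Set.disjoint_left.2
      intro ω h1 h2
      exact hne (by simp_all [Set.mem_preimage])
  have hB : ∀ b : β, (μ (B ⁻¹' {b})).toReal = ∑ a : α, p (a, b) := by
    intro b
    have : B ⁻¹' {b} = ⋃ a ∈ (Finset.univ : Finset α),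
        (fun ω => (A ω, B ω)) ⁻¹' {(a, b)} := by
      ext ω; simp [Set.mem_preimage]
    rw [this, measure_biUnion_finset ?_ fun a _ => hAB (a, b),
      ENNReal.toReal_sum fun a _ => measure_ne_top μ _]
    · intro a _ a' _ hne
      simp only [Function.onFun]
      apply Set.disjoint_left.2
      intro ω h1 h2
      exact hne (by simp_all [Set.mem_preimage])
  -- total mass one
  have htot : ∑ c : α × β, p c = 1 := by
    have : (Set.univ : Set Ω) = ⋃ c ∈ (Finset.univ : Finset (α × β)),
        (fun ω => (A ω, B ω)) ⁻¹' {c} := by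
      ext ω; simp [Set.mem_preimage]
    have hμ : μ (Set.univ) = ∑ c : α × β, μ ((fun ω => (A ω, B ω)) ⁻¹' {c}) := by
      rw [this, measure_biUnion_finset ?_ fun c _ => hAB c]
      intro c _ c' _ hne
      simp only [Function.onFun]
      apply Set.disjoint_left.2
      intro ω h1 h2
      exact hne (by simp_all [Set.mem_preimage])
    have := congrArg ENNReal.toReal hμ
    rw [measure_univ, ENNReal.toReal_sum fun c _ => measure_ne_top μ _] at this
    simpa using this.symm
  -- bounds p ≤ marginals
  have hpA : ∀ c : α × β, p c ≤ ∑ b : β, p (c.1, b) := by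
    rintro ⟨a, b⟩
    exact Finset.single_le_sum (f := fun b => p (a, b)) (fun b _ => hp0 _) (Finset.mem_univ b)
  have hpB : ∀ c : α × β, p c ≤ ∑ a : α, p (a, c.2) := by
    rintro ⟨a, b⟩
    exact Finset.single_le_sum (f := fun a => p (a, b)) (fun a _ => hp0 _) (Finset.mem_univ a)
  set q : α × β → ℝ := fun c => (∑ b : β, p (c.1, b)) * (∑ a : α, p (a, c.2)) with hq_def
  have hq0 : ∀ c, 0 ≤ q c := fun c =>
    mul_nonneg (Finset.sum_nonneg fun _ _ => hp0 _) (Finset.sum_nonneg fun _ _ => hp0 _)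
  have hpq : ∀ c, p c ≠ 0 → 0 < q c := by
    intro c hc
    have h1 : 0 < p c := lt_of_le_of_ne (hp0 c) (Ne.symm hc)
    exact mul_pos (lt_of_lt_of_le h1 (hpA c)) (lt_of_lt_of_le h1 (hpB c))
  have hqsum : ∑ c : α × β, q c ≤ ∑ c : α × β, p c := by
    have : ∑ c : α × β, q c = (∑ a : α, ∑ b : β, p (a, b)) * (∑ b : β, ∑ a : α, p (a, b)) := by
      rw [Finset.sum_mul_sum]
      rw [Fintype.sum_prod_type]
    rw [this, htot]
    have h1 : ∑ a : α, ∑ b : β, p (a, b) = 1 := by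
      rw [← htot, Fintype.sum_prod_type]
    have h2 : ∑ b : β, ∑ a : α, p (a, b) = 1 := by
      rw [← htot, Fintype.sum_prod_type_right]
    rw [h1, h2]; norm_num
  have hgibbs := gibbs p q hp0 hq0 hpq hqsum
  -- rewrite RHS of gibbs
  have hsplit : ∑ c : α × β, -(p c * Real.log (q c)) = ent μ A + ent μ B := by
    have step : ∀ c : α × β, -(p c * Real.log (q c))
        = -(p c * Real.log (∑ b : β, p (c.1, b))) + -(p c * Real.log (∑ a : α, p (a, c.2))) := by
      intro c
      rcases eq_or_ne (p c) 0 with h0 | h0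
      · simp [h0]
      · have hq' := hpq c h0
        have h1 : 0 < p c := lt_of_le_of_ne (hp0 c) (Ne.symm h0)
        have hA' : (0:ℝ) < ∑ b : β, p (c.1, b) := lt_of_lt_of_le h1 (hpA c)
        have hB' : (0:ℝ) < ∑ a : α, p (a, c.2) := lt_of_lt_of_le h1 (hpB c)
        rw [hq_def]
        rw [Real.log_mul (ne_of_gt hA') (ne_of_gt hB')]
        ring
    rw [Finset.sum_congr rfl fun c _ => step c, Finset.sum_add_distrib]
    have e1 : ∑ c : α × β, -(p c * Real.log (∑ b : β, p (c.1, b))) = ent μ A := by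
      rw [Fintype.sum_prod_type]
      unfold ent
      refine Finset.sum_congr rfl fun a _ => ?_
      rw [hA a]
      calc ∑ x : β, -(p (a, x) * Real.log (∑ b : β, p ((a, x).1, b)))
          = ∑ x : β, -p (a, x) * Real.log (∑ b : β, p (a, b)) :=
            Finset.sum_congr rfl fun x _ => (neg_mul _ _).symm
        _ = (∑ x : β, -p (a, x)) * Real.log (∑ b : β, p (a, b)) := by
            rw [Finset.sum_mul]
        _ = Real.negMulLog (∑ b : β, p (a, b)) := by
            simp [Real.negMulLog, Finset.sum_neg_distrib]
    have e2 : ∑ c : α × β, -(p c * Real.log (∑ a : α, p (a, c.2))) = ent μ B := by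
      rw [Fintype.sum_prod_type_right]
      unfold ent
      refine Finset.sum_congr rfl fun b _ => ?_
      rw [hB b]
      calc ∑ x : α, -(p (x, b) * Real.log (∑ a : α, p (a, (x, b).2)))
          = ∑ x : α, -p (x, b) * Real.log (∑ a : α, p (a, b)) :=
            Finset.sum_congr rfl fun x _ => (neg_mul _ _).symm
        _ = (∑ x : α, -p (x, b)) * Real.log (∑ a : α, p (a, b)) := by
            rw [Finset.sum_mul]
        _ = Real.negMulLog (∑ a : α, p (a, b)) := by
            simp [Real.negMulLog, Finset.sum_neg_distrib]
    rw [e1, e2]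
  rw [hsplit] at hgibbs
  exact hgibbs
end aux

/-- Cut-set converse for the complementary delivery problem: if decoder 1 can
recover `Y` from `(M, X)` and decoder 2 can recover `X` from `(M, Y)` almost
surely, where `M = φ(X, Y)`, then `H[M] ≥ max(H[Y | X], H[X | Y])`. -/
theorem complementary_delivery_converse
    {Ω : Type*} [MeasurableSpace Ω] (μ : Measure Ω) [IsProbabilityMeasure μ]
    {𝒳 𝒴 𝓜 : Type*} [Fintype 𝒳] [Fintype 𝒴] [Fintype 𝓜]
    [MeasurableSpace 𝒳] [MeasurableSingletonClass 𝒳]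
    [MeasurableSpace 𝒴] [MeasurableSingletonClass 𝒴]
    (X : Ω → 𝒳) (Y : Ω → 𝒴) (hX : Measurable X) (hY : Measurable Y)
    (φ : 𝒳 × 𝒴 → 𝓜)
    (hdec1 : ∃ ψ₁ : 𝓜 × 𝒳 → 𝒴, ∀ᵐ ω ∂μ, ψ₁ (φ (X ω, Y ω), X ω) = Y ω)
    (hdec2 : ∃ ψ₂ : 𝓜 × 𝒴 → 𝒳, ∀ᵐ ω ∂μ, ψ₂ (φ (X ω, Y ω), Y ω) = X ω) :
    ent μ (fun ω => φ (X ω, Y ω)) ≥ max (condEnt μ X Y) (condEnt μ Y X) := by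
  obtain ⟨ψ₁, h1⟩ := hdec1
  obtain ⟨ψ₂, h2⟩ := hdec2
  set M : Ω → 𝓜 := fun ω => φ (X ω, Y ω) with hM
  have hXY : Measurable (fun ω => (X ω, Y ω)) := hX.prodMk hY
  have hms : ∀ s : Set (𝒳 × 𝒴), MeasurableSet s := fun s => s.toFinite.measurableSet
  have hZ1 : ∀ c : 𝓜 × 𝒳, MeasurableSet ((fun ω => (M ω, X ω)) ⁻¹' {c}) := by
    intro c
    have : (fun ω => (M ω, X ω)) ⁻¹' {c}
        = (fun ω => (X ω, Y ω)) ⁻¹' {p : 𝒳 × 𝒴 | (φ p, p.1) = c} := by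
      ext ω; simp [hM, Set.mem_preimage]
    rw [this]; exact hXY (hms _)
  have hZ2 : ∀ c : 𝓜 × 𝒴, MeasurableSet ((fun ω => (M ω, Y ω)) ⁻¹' {c}) := by
    intro c
    have : (fun ω => (M ω, Y ω)) ⁻¹' {c}
        = (fun ω => (X ω, Y ω)) ⁻¹' {p : 𝒳 × 𝒴 | (φ p, p.2) = c} := by
      ext ω; simp [hM, Set.mem_preimage]
    rw [this]; exact hXY (hms _)
  have b1 : condEnt μ X Y ≤ ent μ M := by
    have e1 : ent μ (fun ω => (X ω, Y ω))
        = ent μ (fun ω => (fun c : 𝓜 × 𝒳 => (c.2, ψ₁ c)) ((M ω, X ω))) := by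
      apply ent_congr_ae μ
      filter_upwards [h1] with ω hω
      simp [hM, hω]
    have e2 : ent μ (fun ω => (fun c : 𝓜 × 𝒳 => (c.2, ψ₁ c)) ((M ω, X ω)))
        ≤ ent μ (fun ω => (M ω, X ω)) :=
      ent_comp_le μ (Z := fun ω => (M ω, X ω)) hZ1 (fun c => (c.2, ψ₁ c))
    have e3 : ent μ (fun ω => (M ω, X ω)) ≤ ent μ M + ent μ X := ent_pair_le μ hZ1
    unfold condEnt
    linarith
  have b2 : condEnt μ Y X ≤ ent μ M := by
    have e1 : ent μ (fun ω => (Y ω, X ω))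
        = ent μ (fun ω => (fun c : 𝓜 × 𝒴 => (c.2, ψ₂ c)) ((M ω, Y ω))) := by
      apply ent_congr_ae μ
      filter_upwards [h2] with ω hω
      simp [hM, hω]
    have e2 : ent μ (fun ω => (fun c : 𝓜 × 𝒴 => (c.2, ψ₂ c)) ((M ω, Y ω)))
        ≤ ent μ (fun ω => (M ω, Y ω)) :=
      ent_comp_le μ (Z := fun ω => (M ω, Y ω)) hZ2 (fun c => (c.2, ψ₂ c))
    have e3 : ent μ (fun ω => (M ω, Y ω)) ≤ ent μ M + ent μ Y := ent_pair_le μ hZ2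
    unfold condEnt
    linarith
  exact max_le b1 b2
end

section
/- Let ι be a finite index type, for each j ∈ ι let α_j be a finite type, and let X_j (j ∈ ι) be random variables on a probability space (Ω, μ) with X_j taking values in α_j. Let 𝓜 be a finite type, φ : (Π j, α_j) → 𝓜, and M = φ(fun j => X_j). Let m be a finite set of receivers and for each receiver i let H(i) ⊆ ι. Suppose for each receiver i there is a map ψ_i such that ψ_i(M, (X_j)_{j ∈ H(i)}) = (X_j)_{j ∈ H(i)ᶜ} almost surely. Then H[M] ≥ H[(X_j)_{j ∈ H(i)ᶜ} | (X_j)_{j ∈ H(i)}] for every receiver i; in particular H[M] ≥ max over receivers i of H[(X_j)_{j ∈ H(i)ᶜ} | (X_j)_{j ∈ H(i)}]. -/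
open MeasureTheory

lemma ent_congr {Ω : Type*} [MeasurableSpace Ω] (μ : Measure Ω) {α : Type*} [Fintype α]
    {X Y : Ω → α} (h : X =ᵐ[μ] Y) : ent μ X = ent μ Y := by
  unfold ent
  refine Finset.sum_congr rfl fun a _ => ?_
  have : X ⁻¹' {a} =ᵐ[μ] Y ⁻¹' {a} := by
    rw [Filter.eventuallyEq_set]
    filter_upwards [h] with ω hω
    simp [Set.mem_preimage, hω]
  rw [measure_congr this]

lemma sum_p_eq {Ω : Type*} [MeasurableSpace Ω] (μ : Measure Ω) [IsProbabilityMeasure μ]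
    {α : Type*} [Fintype α] [MeasurableSpace α] [MeasurableSingletonClass α]
    {X : Ω → α} (hX : Measurable X) (s : Finset α) :
    ∑ a ∈ s, (μ (X ⁻¹' {a})).toReal = (μ (X ⁻¹' ↑s)).toReal := by
  rw [← ENNReal.toReal_sum (fun a _ => measure_ne_top μ _)]
  rw [sum_measure_preimage_singleton s (fun a _ => hX (measurableSet_singleton a))]

lemma ent_comp_le_s2 {Ω : Type*} [MeasurableSpace Ω] (μ : Measure Ω) [IsProbabilityMeasure μ]
    {α β : Type*} [Fintype α] [Fintype β] [MeasurableSpace α] [MeasurableSingletonClass α]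
    {X : Ω → α} (hX : Measurable X) (f : α → β) :
    ent μ (fun ω => f (X ω)) ≤ ent μ X := by
  classical
  unfold ent
  set p : α → ℝ := fun a => (μ (X ⁻¹' {a})).toReal with hp
  have hp0 : ∀ a, 0 ≤ p a := fun a => ENNReal.toReal_nonneg
  have hfiber : ∀ b : β, (μ ((fun ω => f (X ω)) ⁻¹' {b})).toReal
      = ∑ a ∈ Finset.univ.filter (fun a => f a = b), p a := by
    intro b
    rw [sum_p_eq μ hX]
    congr 1
    congr 1
    ext ω
    simp [Set.mem_preimage]
  calc ∑ b : β, Real.negMulLog ((μ ((fun ω => f (X ω)) ⁻¹' {b})).toReal)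
      ≤ ∑ b : β, ∑ a ∈ Finset.univ.filter (fun a => f a = b), Real.negMulLog (p a) := by
        refine Finset.sum_le_sum fun b _ => ?_
        rw [hfiber b]
        set s := Finset.univ.filter (fun a => f a = b)
        set q := ∑ a ∈ s, p a with hq
        have hq0 : 0 ≤ q := Finset.sum_nonneg fun a _ => hp0 a
        have hexp : Real.negMulLog q = ∑ a ∈ s, (-(p a) * Real.log q) := by
          rw [Real.negMulLog, neg_mul]
          rw [show q * Real.log q = ∑ a ∈ s, p a * Real.log q by rw [hq, Finset.sum_mul]]
          rw [← Finset.sum_neg_distrib]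
          simp [neg_mul]
        rw [hexp]
        refine Finset.sum_le_sum fun a ha => ?_
        rcases eq_or_lt_of_le (hp0 a) with h0 | h0
        · simp [← h0, Real.negMulLog]
        · have hle : p a ≤ q := Finset.single_le_sum (fun a _ => hp0 a) ha
          have : Real.log (p a) ≤ Real.log q := Real.log_le_log h0 hle
          rw [Real.negMulLog, neg_mul]
          nlinarith
    _ = ∑ a : α, Real.negMulLog (p a) :=
        Finset.sum_fiberwise_of_maps_to (fun a _ => Finset.mem_univ (f a)) _

lemma ent_pair_le_s2 {Ω : Type*} [MeasurableSpace Ω] (μ : Measure Ω) [IsProbabilityMeasure μ]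
    {α β : Type*} [Fintype α] [Fintype β] [MeasurableSpace α] [MeasurableSingletonClass α]
    [MeasurableSpace β] [MeasurableSingletonClass β]
    {X : Ω → α} {Y : Ω → β} (hX : Measurable X) (hY : Measurable Y) :
    ent μ (fun ω => (X ω, Y ω)) ≤ ent μ X + ent μ Y := by
  classical
  have hXY : Measurable (fun ω => (X ω, Y ω)) := hX.prodMk hY
  set r : α × β → ℝ := fun c => (μ ((fun ω => (X ω, Y ω)) ⁻¹' {c})).toReal with hr
  have hr0 : ∀ c, 0 ≤ r c := fun c => ENNReal.toReal_nonneg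
  set P : α → ℝ := fun a => ∑ b : β, r (a, b) with hP
  set Q : β → ℝ := fun b => ∑ a : α, r (a, b) with hQ
  have hP0 : ∀ a, 0 ≤ P a := fun a => Finset.sum_nonneg fun b _ => hr0 _
  have hQ0 : ∀ b, 0 ≤ Q b := fun b => Finset.sum_nonneg fun a _ => hr0 _
  have hrP : ∀ a b, r (a, b) ≤ P a := fun a b =>
    Finset.single_le_sum (fun b _ => hr0 (a, b)) (Finset.mem_univ b)
  have hrQ : ∀ a b, r (a, b) ≤ Q b := fun a b =>
    Finset.single_le_sum (fun a _ => hr0 (a, b)) (Finset.mem_univ a)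
  have htot : ∑ c : α × β, r c = 1 := by
    rw [hr]
    rw [sum_p_eq μ hXY]
    simp
  have hPX : ∀ a, (μ (X ⁻¹' {a})).toReal = P a := by
    intro a
    rw [hP]
    have : X ⁻¹' {a} = (fun ω => (X ω, Y ω)) ⁻¹' ↑(Finset.univ.filter (fun c : α × β => c.1 = a)) := by
      ext ω; simp [Set.mem_preimage]
    rw [this, ← sum_p_eq μ hXY]
    rw [Finset.sum_filter]
    rw [Fintype.sum_prod_type]
    rw [Finset.sum_eq_single a (fun x _ hx => by simp [hx]) (by simp)]
    simp [hr]
  have hQY : ∀ b, (μ (Y ⁻¹' {b})).toReal = Q b := by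
    intro b
    rw [hQ]
    have : Y ⁻¹' {b} = (fun ω => (X ω, Y ω)) ⁻¹' ↑(Finset.univ.filter (fun c : α × β => c.2 = b)) := by
      ext ω; simp [Set.mem_preimage]
    rw [this, ← sum_p_eq μ hXY]
    rw [Finset.sum_filter]
    rw [Fintype.sum_prod_type_right]
    rw [Finset.sum_eq_single b (fun x _ hx => by simp [hx]) (by simp)]
    simp [hr]
  have key : ∀ c : α × β, Real.negMulLog (r c)
      ≤ -(r c) * (Real.log (P c.1) + Real.log (Q c.2)) + (P c.1 * Q c.2 - r c) := by
    rintro ⟨a, b⟩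
    rcases eq_or_lt_of_le (hr0 (a, b)) with h0 | h0
    · simp only [← h0, Real.negMulLog_zero, neg_zero, zero_mul, sub_zero, zero_add]
      positivity
    · have hPa : 0 < P a := lt_of_lt_of_le h0 (hrP a b)
      have hQb : 0 < Q b := lt_of_lt_of_le h0 (hrQ a b)
      have hlog : Real.log (P a * Q b / r (a, b)) ≤ P a * Q b / r (a, b) - 1 :=
        Real.log_le_sub_one_of_pos (by positivity)
      rw [Real.log_div (by positivity) (ne_of_gt h0), Real.log_mul (ne_of_gt hPa) (ne_of_gt hQb)] at hlog
      have := mul_le_mul_of_nonneg_left hlog (le_of_lt h0)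
      rw [Real.negMulLog]
      have hrr : r (a, b) * (P a * Q b / r (a, b)) = P a * Q b := by
        field_simp
      nlinarith
  calc ent μ (fun ω => (X ω, Y ω)) = ∑ c : α × β, Real.negMulLog (r c) := rfl
    _ ≤ ∑ c : α × β, (-(r c) * (Real.log (P c.1) + Real.log (Q c.2)) + (P c.1 * Q c.2 - r c)) :=
        Finset.sum_le_sum fun c _ => key c
    _ = ∑ c : α × β, -(r c) * (Real.log (P c.1) + Real.log (Q c.2))
        + (∑ c : α × β, P c.1 * Q c.2 - ∑ c : α × β, r c) := by
        rw [Finset.sum_add_distrib, Finset.sum_sub_distrib]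
    _ = ∑ c : α × β, -(r c) * (Real.log (P c.1) + Real.log (Q c.2)) := by
        have h1 : ∑ c : α × β, P c.1 * Q c.2 = (∑ a : α, P a) * (∑ b : β, Q b) := by
          rw [Finset.sum_mul_sum, Fintype.sum_prod_type]
        have h2 : ∑ a : α, P a = 1 := by rw [← htot, Fintype.sum_prod_type]
        have h3 : ∑ b : β, Q b = 1 := by rw [← htot, Fintype.sum_prod_type_right]
        rw [h1, h2, h3, htot]; ring
    _ = ent μ X + ent μ Y := by
        unfold ent
        have e1 : ∀ c : α × β, -(r c) * (Real.log (P c.1) + Real.log (Q c.2))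
            = -(r c) * Real.log (P c.1) + -(r c) * Real.log (Q c.2) := fun c => by ring
        simp_rw [e1]
        rw [Finset.sum_add_distrib]
        congr 1
        · rw [Fintype.sum_prod_type]
          refine Finset.sum_congr rfl fun a _ => ?_
          rw [hPX a]
          have e2 : ∑ y : β, -r (a, y) * Real.log (P (a, y).1)
              = (∑ y : β, -r (a, y)) * Real.log (P a) := by rw [Finset.sum_mul]
          rw [e2, Finset.sum_neg_distrib, Real.negMulLog, neg_mul]
        · rw [Fintype.sum_prod_type_right]
          refine Finset.sum_congr rfl fun b _ => ?_
          rw [hQY b]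
          have e2 : ∑ x : α, -r (x, b) * Real.log (Q (x, b).2)
              = (∑ x : α, -r (x, b)) * Real.log (Q b) := by rw [Finset.sum_mul]
          rw [e2, Finset.sum_neg_distrib, Real.negMulLog, neg_mul]

/-- Cut-set converse for complementary delivery index coding: a server broadcasts
`M = φ(X)` of the message tuple `X = (X_j)_{j ∈ ι}`; if every receiver `i`, which
has side information `(X_j)_{j ∈ H i}`, can recover `(X_j)_{j ∈ (H i)ᶜ}` almost
surely from `M` and its side information, then for every receiver `i`,
`H[M] ≥ H[(X_j)_{j ∈ (H i)ᶜ} | (X_j)_{j ∈ H i}]` (hence `H[M]` is at least the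
maximum of these quantities over receivers). -/
theorem complementary_delivery_index_coding_converse
    {Ω : Type*} [MeasurableSpace Ω] (μ : Measure Ω) [IsProbabilityMeasure μ]
    {ι : Type*} [Fintype ι] [DecidableEq ι]
    {α : ι → Type*} [∀ j, Fintype (α j)]
    [∀ j, MeasurableSpace (α j)] [∀ j, MeasurableSingletonClass (α j)]
    (X : ∀ j, Ω → α j) (hX : ∀ j, Measurable (X j))
    {𝓜 : Type*} [Fintype 𝓜] (φ : (∀ j, α j) → 𝓜)
    {R : Type*} [Fintype R] (H : R → Finset ι)
    (hdec : ∀ i : R, ∃ ψ : 𝓜 × (∀ j : (H i : Finset ι), α j) → (∀ j : ((H i)ᶜ : Finset ι), α j),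
      ∀ᵐ ω ∂μ, ψ (φ (fun j => X j ω), fun j => X j ω) = fun j : ((H i)ᶜ : Finset ι) => X j ω) :
    ∀ i : R, ent μ (fun ω => φ (fun j => X j ω)) ≥
      condEnt μ (fun ω => fun j : (H i : Finset ι) => X j ω)
        (fun ω => fun j : ((H i)ᶜ : Finset ι) => X j ω) := by
  intro i
  classical
  obtain ⟨ψ, hψ⟩ := hdec i
  letI : MeasurableSpace 𝓜 := ⊤
  haveI : MeasurableSingletonClass 𝓜 := ⟨fun _ => trivial⟩
  have hZm : Measurable (fun ω (j : ι) => X j ω) := measurable_pi_lambda _ hX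
  have hM : Measurable (fun ω => φ (fun j => X j ω)) :=
    (measurable_of_countable φ).comp hZm
  have hXHm : Measurable (fun ω => fun j : (H i : Finset ι) => X j ω) :=
    measurable_pi_lambda _ fun j => hX j
  have hPair : Measurable
      (fun ω => (φ (fun j => X j ω), fun j : (H i : Finset ι) => X j ω)) :=
    hM.prodMk hXHm
  rw [ge_iff_le, condEnt, sub_le_iff_le_add]
  have h1 : ent μ (fun ω => ((fun j : (H i : Finset ι) => X j ω),
        (fun j : ((H i)ᶜ : Finset ι) => X j ω)))
      = ent μ (fun ω => ((fun j : (H i : Finset ι) => X j ω),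
        ψ (φ (fun j => X j ω), fun j : (H i : Finset ι) => X j ω))) := by
    refine ent_congr μ ?_
    filter_upwards [hψ] with ω hω
    exact Prod.ext rfl hω.symm
  have h2 : ent μ (fun ω => ((fun j : (H i : Finset ι) => X j ω),
        ψ (φ (fun j => X j ω), fun j : (H i : Finset ι) => X j ω)))
      ≤ ent μ (fun ω => (φ (fun j => X j ω), fun j : (H i : Finset ι) => X j ω)) :=
    ent_comp_le_s2 μ hPair (fun p => (p.2, ψ p))
  have h3 : ent μ (fun ω => (φ (fun j => X j ω), fun j : (H i : Finset ι) => X j ω))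
      ≤ ent μ (fun ω => φ (fun j => X j ω))
        + ent μ (fun ω => fun j : (H i : Finset ι) => X j ω) :=
    ent_pair_le_s2 μ hM hXHm
  exact h1.trans_le (h2.trans h3)
end
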